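/- Let λ > 0 satisfy λ⁴ = λ² + 1 (so λ = √((1+√5)/2) ≈ 1.27202, and automatically 1 < λ < 3), and let b = 0, so that c¹ = −1/(2λ) and c² = 1/(2λ). Then the turning point c¹ of q = q_{λ,0} is periodic of (exact) period 6 with itinerary {c¹, J², J¹, J², J⁰, J², c¹, …}: q(c¹) = 1/2 ∈ (c², a), q²(c¹) = λ/2 − 1 ∈ (c¹, c²), q³(c¹) = −λ²/2 + λ ∈ (c², a), q⁴(c¹) = −λ³/2 + λ² − 1 ∈ (−a, c¹), q⁵(c¹) = −λ⁴/2 + λ³ − λ + 1 ∈ (c², a), and q⁶(c¹) = c¹. -/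

import Mathlib

/-- The bimodal piecewise-linear map `q_{λ,b}` of constant slope `±λ`:
`q(x) = λx+1` for `x ≤ c¹`, `q(x) = −λx+b` for `c¹ ≤ x ≤ c²`, `q(x) = λx−1` for `x ≥ c²`,
where `c¹ = (b−1)/(2λ)` and `c² = (b+1)/(2λ)` (the formulas agree at `c¹` and `c²`). -/
noncomputable def qmap (lam b : ℝ) (x : ℝ) : ℝ :=
  if x ≤ (b - 1) / (2 * lam) then lam * x + 1
  else if x ≤ (b + 1) / (2 * lam) then -lam * x + b
  else lam * x - 1

set_option maxHeartbeats 1000000 in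
/-- Let `λ > 0` satisfy `λ⁴ = λ² + 1` and let `b = 0`, so `c¹ = −1/(2λ)`, `c² = 1/(2λ)` and
`a = 1/(λ−1)`. Then the turning point `c¹` of `q = q_{λ,0}` is periodic of exact period 6
with itinerary `{c¹, J², J¹, J², J⁰, J², c¹, …}`:
`q(c¹) = 1/2 ∈ (c², a)`, `q²(c¹) = λ/2 − 1 ∈ (c¹, c²)`, `q³(c¹) = −λ²/2 + λ ∈ (c², a)`,
`q⁴(c¹) = −λ³/2 + λ² − 1 ∈ (−a, c¹)`, `q⁵(c¹) = −λ⁴/2 + λ³ − λ + 1 ∈ (c², a)`, and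
`q⁶(c¹) = c¹`. -/
theorem exceptional_period_six_orbit (lam : ℝ) (hpos : 0 < lam)
    (hroot : lam ^ 4 = lam ^ 2 + 1) :
    (qmap lam 0)^[1] (-(1 / (2 * lam))) = 1 / 2 ∧
    (1 / 2 : ℝ) ∈ Set.Ioo (1 / (2 * lam)) (1 / (lam - 1)) ∧
    (qmap lam 0)^[2] (-(1 / (2 * lam))) = lam / 2 - 1 ∧
    (lam / 2 - 1) ∈ Set.Ioo (-(1 / (2 * lam))) (1 / (2 * lam)) ∧
    (qmap lam 0)^[3] (-(1 / (2 * lam))) = -lam ^ 2 / 2 + lam ∧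
    (-lam ^ 2 / 2 + lam) ∈ Set.Ioo (1 / (2 * lam)) (1 / (lam - 1)) ∧
    (qmap lam 0)^[4] (-(1 / (2 * lam))) = -lam ^ 3 / 2 + lam ^ 2 - 1 ∧
    (-lam ^ 3 / 2 + lam ^ 2 - 1) ∈ Set.Ioo (-(1 / (lam - 1))) (-(1 / (2 * lam))) ∧
    (qmap lam 0)^[5] (-(1 / (2 * lam))) = -lam ^ 4 / 2 + lam ^ 3 - lam + 1 ∧
    (-lam ^ 4 / 2 + lam ^ 3 - lam + 1) ∈ Set.Ioo (1 / (2 * lam)) (1 / (lam - 1)) ∧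
    (qmap lam 0)^[6] (-(1 / (2 * lam))) = -(1 / (2 * lam)) := by
  -- tight bounds on lam
  have hu : (2 * lam ^ 2 - 1) ^ 2 = 5 := by nlinarith [hroot]
  have hu0 : 1 < lam ^ 2 := by nlinarith [hroot, sq_nonneg lam, sq_nonneg (lam^2 - 1)]
  have hu1 : (1618 : ℝ)/1000 < lam ^ 2 := by nlinarith [hu, hu0]
  have hu2 : lam ^ 2 < (16181 : ℝ)/10000 := by nlinarith [hu, hu0]
  have hl1 : (1272 : ℝ)/1000 < lam := by nlinarith [hu1, hpos]
  have hl2 : lam < (12721 : ℝ)/10000 := by nlinarith [hu2, hpos]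
  have h2l : (0:ℝ) < 2 * lam := by linarith
  have hlm1 : (0:ℝ) < lam - 1 := by linarith
  -- step values
  have s1 : qmap lam 0 (-(1 / (2 * lam))) = 1 / 2 := by
    rw [qmap, if_pos (le_of_eq (by ring))]
    field_simp
    ring
  have s2 : qmap lam 0 (1 / 2) = lam / 2 - 1 := by
    rw [qmap, if_neg (by rw [not_le, div_lt_iff₀ h2l]; nlinarith),
      if_neg (by rw [not_le, div_lt_iff₀ h2l]; nlinarith)]
    ring
  have s3 : qmap lam 0 (lam / 2 - 1) = -lam ^ 2 / 2 + lam := by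
    rw [qmap, if_neg (by rw [not_le, div_lt_iff₀ h2l]; nlinarith),
      if_pos (by rw [le_div_iff₀ h2l]; nlinarith)]
    ring
  have s4 : qmap lam 0 (-lam ^ 2 / 2 + lam) = -lam ^ 3 / 2 + lam ^ 2 - 1 := by
    rw [qmap, if_neg (by rw [not_le, div_lt_iff₀ h2l]; nlinarith [hl1, hl2, hroot]),
      if_neg (by rw [not_le, div_lt_iff₀ h2l]; nlinarith [hl1, hl2, hroot])]
    ring
  have s5 : qmap lam 0 (-lam ^ 3 / 2 + lam ^ 2 - 1) = -lam ^ 4 / 2 + lam ^ 3 - lam + 1 := by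
    rw [qmap, if_pos (by rw [le_div_iff₀ h2l]; nlinarith [hl1, hl2, hroot, hu1, hu2])]
    ring
  have s6 : qmap lam 0 (-lam ^ 4 / 2 + lam ^ 3 - lam + 1) = -(1 / (2 * lam)) := by
    rw [qmap, if_neg (by rw [not_le, div_lt_iff₀ h2l]; nlinarith [hl1, hl2, hroot, hu1, hu2]),
      if_neg (by rw [not_le, div_lt_iff₀ h2l]; nlinarith [hl1, hl2, hroot, hu1, hu2])]
    have hne : (2*lam) ≠ 0 := ne_of_gt h2l
    field_simp
    linear_combination (-(lam^2 - 2*lam + 1)) * hroot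
  -- iterates
  have i1 : (qmap lam 0)^[1] (-(1 / (2 * lam))) = 1 / 2 := by
    simpa using s1
  have i2 : (qmap lam 0)^[2] (-(1 / (2 * lam))) = lam / 2 - 1 := by
    rw [Function.iterate_succ_apply', i1, s2]
  have i3 : (qmap lam 0)^[3] (-(1 / (2 * lam))) = -lam ^ 2 / 2 + lam := by
    rw [Function.iterate_succ_apply', i2, s3]
  have i4 : (qmap lam 0)^[4] (-(1 / (2 * lam))) = -lam ^ 3 / 2 + lam ^ 2 - 1 := by
    rw [Function.iterate_succ_apply', i3, s4]
  have i5 : (qmap lam 0)^[5] (-(1 / (2 * lam))) = -lam ^ 4 / 2 + lam ^ 3 - lam + 1 := by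
    rw [Function.iterate_succ_apply', i4, s5]
  have i6 : (qmap lam 0)^[6] (-(1 / (2 * lam))) = -(1 / (2 * lam)) := by
    rw [Function.iterate_succ_apply', i5, s6]
  refine ⟨i1, ⟨?_, ?_⟩, i2, ⟨?_, ?_⟩, i3, ⟨?_, ?_⟩, i4, ⟨?_, ?_⟩, i5, ⟨?_, ?_⟩, i6⟩
  · rw [div_lt_div_iff₀ h2l (by norm_num : (0:ℝ) < 2)]; nlinarith
  · rw [div_lt_div_iff₀ (by norm_num : (0:ℝ) < 2) hlm1]; nlinarith
  · rw [neg_lt, lt_div_iff₀ h2l]; nlinarith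
  · rw [lt_div_iff₀ h2l]; nlinarith
  · rw [div_lt_iff₀ h2l]; nlinarith [hroot, hu1, hu2, hl1, hl2]
  · rw [lt_div_iff₀ hlm1]; nlinarith [hroot, hu1, hu2, hl1, hl2]
  · rw [neg_lt, lt_div_iff₀ hlm1]; nlinarith [hroot, hu1, hu2, hl1, hl2]
  · rw [lt_neg, div_lt_iff₀ h2l]
    nlinarith [hroot, hu1, hu2, hl1, hl2]
  · rw [div_lt_iff₀ h2l]
    have h5 : lam ^ 5 = lam ^ 3 + lam := by linear_combination lam * hroot
    nlinarith [hroot, h5, hu1, hu2, hl1, hl2]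
  · rw [lt_div_iff₀ hlm1]
    have h5 : lam ^ 5 = lam ^ 3 + lam := by linear_combination lam * hroot
    nlinarith [hroot, h5, hu1, hu2, hl1, hl2]
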